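/- For the biased assimilation model with $b_i = 1$ on an undirected star graph with $N$ nodes (node 1 the center), unit weights $w_{ij} = 1$ for edges and self-weights $w_{ii} \ge 0$: a vector $x^* \in [0,1]^N$ with $x_1^* \notin \{0,1\}$ and some leaf value $x_i^* \notin \{0,1\}$ is a fixed point if and only if $x_1^* = 1/2$ and $\sum_{i=2}^N x_i^* = (N-1)/2$. -/

import Mathlib

open Finset Filter Topology

/-- Weighted sum of neighbors' opinions: `s_i = ∑_{j ∈ N_i} w_{ij} x_j`. -/
noncomputable def wsum {N : ℕ} (w : Fin N → Fin N → ℝ) (Nbr : Fin N → Finset (Fin N))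
    (x : Fin N → ℝ) (i : Fin N) : ℝ :=
  ∑ j ∈ Nbr i, w i j * x j

/-- Weighted degree `d_i = ∑_{j ∈ N_i} w_{ij}`. -/
noncomputable def degw {N : ℕ} (w : Fin N → Fin N → ℝ) (Nbr : Fin N → Finset (Fin N))
    (i : Fin N) : ℝ :=
  ∑ j ∈ Nbr i, w i j

/-- Biased assimilation update map (componentwise). Powers are real powers. -/
noncomputable def F {N : ℕ} (w : Fin N → Fin N → ℝ) (Nbr : Fin N → Finset (Fin N))
    (b : Fin N → ℝ) (x : Fin N → ℝ) (i : Fin N) : ℝ :=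
  (w i i * x i + x i ^ b i * wsum w Nbr x i) /
    (w i i + x i ^ b i * wsum w Nbr x i + (1 - x i) ^ b i * (degw w Nbr i - wsum w Nbr x i))

/-- The directed influence graph (edge `j → i` iff `j ∈ Nbr i`) is strongly connected. -/
def StronglyConnected {N : ℕ} (Nbr : Fin N → Finset (Fin N)) : Prop :=
  ∀ i j : Fin N, Relation.TransGen (fun a c => a ∈ Nbr c) i j

/-- Lyapunov stability of a fixed point of the discrete-time system `x⁺ = G x`. -/
def LyapStable {E : Type*} [NormedAddCommGroup E] (G : E → E) (q : E) : Prop :=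
  ∀ ε > 0, ∃ δ > 0, ∀ x, ‖x - q‖ < δ → ∀ k : ℕ, ‖G^[k] x - q‖ < ε

/-- Local exponential stability of a fixed point of `x⁺ = G x`. -/
def LocExpStable {E : Type*} [NormedAddCommGroup E] (G : E → E) (q : E) : Prop :=
  ∃ δ > 0, ∃ C > 0, ∃ r, 0 ≤ r ∧ r < 1 ∧
    ∀ x, ‖x - q‖ ≤ δ → ∀ k : ℕ, ‖G^[k] x - q‖ ≤ C * r ^ k * ‖x - q‖

/-- Spectral radius of a real square matrix: supremum of moduli of its complex eigenvalues. -/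
noncomputable def specRad {n : ℕ} (M : Matrix (Fin n) (Fin n) ℝ) : ℝ :=
  sSup {r : ℝ | ∃ μ : ℂ, (M.map (fun a => (a : ℂ))).charpoly.IsRoot μ ∧ r = ‖μ‖}

theorem stmt18 {N : ℕ} (hN : 2 ≤ N) (c : Fin N)
    (Nbr : Fin N → Finset (Fin N))
    (hNbrC : Nbr c = Finset.univ.erase c) (hNbrL : ∀ i, i ≠ c → Nbr i = {c})
    (w : Fin N → Fin N → ℝ) (hw : ∀ i j, i ≠ j → w i j = 1) (hwii : ∀ i, 0 ≤ w i i)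
    (b : Fin N → ℝ) (hb : ∀ i, b i = 1)
    (x : Fin N → ℝ) (hx01 : ∀ i, x i ∈ Set.Icc (0 : ℝ) 1)
    (hc : x c ≠ 0 ∧ x c ≠ 1) (hleaf : ∃ i, i ≠ c ∧ x i ≠ 0 ∧ x i ≠ 1) :
    F w Nbr b x = x ↔
      (x c = 1/2 ∧ ∑ i ∈ Finset.univ.erase c, x i = ((N : ℝ) - 1) / 2) := by
  have hN2 : (2:ℝ) ≤ (N:ℝ) := by exact_mod_cast hN
  obtain ⟨hc0, hc1⟩ := hc
  obtain ⟨i0, hi0c, hi00, hi01⟩ := hleaf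
  set S := ∑ i ∈ Finset.univ.erase c, x i with hS
  have hwsc : wsum w Nbr x c = S := by
    rw [wsum, hNbrC]
    exact Finset.sum_congr rfl fun j hj => by
      rw [hw c j (Ne.symm (Finset.mem_erase.mp hj).1), one_mul]
  have hdc : degw w Nbr c = (N:ℝ) - 1 := by
    rw [degw, hNbrC,
      Finset.sum_congr rfl fun j hj => hw c j (Ne.symm (Finset.mem_erase.mp hj).1),
      Finset.sum_const, Finset.card_erase_of_mem (Finset.mem_univ c), Finset.card_univ,
      Fintype.card_fin, nsmul_eq_mul, mul_one, Nat.cast_sub (by omega), Nat.cast_one]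
  have hwsl : ∀ i, i ≠ c → wsum w Nbr x i = x c := fun i hic => by
    rw [wsum, hNbrL i hic, Finset.sum_singleton, hw i c hic, one_mul]
  have hdl : ∀ i, i ≠ c → degw w Nbr i = 1 := fun i hic => by
    rw [degw, hNbrL i hic, Finset.sum_singleton, hw i c hic]
  have hF : ∀ i, F w Nbr b x i =
      (w i i * x i + x i * wsum w Nbr x i) /
      (w i i + x i * wsum w Nbr x i + (1 - x i) * (degw w Nbr i - wsum w Nbr x i)) := by
    intro i
    rw [F, hb i, Real.rpow_one, Real.rpow_one]
  constructor
  · intro h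
    have hEi := congrFun h i0
    rw [hF i0, hwsl i0 hi0c, hdl i0 hi0c] at hEi
    have hDne : w i0 i0 + x i0 * x c + (1 - x i0) * (1 - x c) ≠ 0 := by
      intro h0
      rw [h0, div_zero] at hEi
      exact hi00 hEi.symm
    rw [div_eq_iff hDne] at hEi
    have hxc : x c = 1/2 := by
      have key : x i0 * (1 - x i0) * (2 * x c - 1) = 0 := by linear_combination hEi
      rcases mul_eq_zero.mp key with h1 | h2
      · rcases mul_eq_zero.mp h1 with h3 | h4
        · exact absurd h3 hi00
        · exact absurd (by linarith : x i0 = 1) hi01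
      · linarith
    have hEc := congrFun h c
    rw [hF c, hwsc, hdc] at hEc
    have hDcne : w c c + x c * S + (1 - x c) * ((N:ℝ) - 1 - S) ≠ 0 := by
      intro h0
      rw [h0, div_zero] at hEc
      exact hc0 hEc.symm
    rw [div_eq_iff hDcne] at hEc
    have key2 : x c * (1 - x c) * (2 * S - ((N:ℝ) - 1)) = 0 := by linear_combination hEc
    refine ⟨hxc, ?_⟩
    rcases mul_eq_zero.mp key2 with h1 | h2
    · rcases mul_eq_zero.mp h1 with h3 | h4
      · exact absurd h3 hc0
      · exact absurd (by linarith : x c = 1) hc1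
    · linarith
  · rintro ⟨hxc, hSval⟩
    funext i
    by_cases hic : i = c
    · subst hic
      rw [hF i, hwsc, hdc, hSval, hxc]
      have hne : w i i + 1/2 * (((N:ℝ) - 1)/2) + (1 - 1/2) * ((N:ℝ) - 1 - ((N:ℝ) - 1)/2) ≠ 0 := by
        have := hwii i
        nlinarith
      rw [div_eq_iff hne]
      ring
    · rw [hF i, hwsl i hic, hdl i hic, hxc]
      have hne : w i i + x i * (1/2) + (1 - x i) * (1 - 1/2) ≠ 0 := by
        have := hwii i
        nlinarith
      rw [div_eq_iff hne]
      ring
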